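/- Let b(n) denote the number of permutations π of {1,...,n} such that there are no indices a < b < c < d with max{π(a), π(c)} < min{π(b), π(d)}. Then b(1) = 1, b(2) = 2, and for all n ≥ 3, b(n) = 4·b(n-1) − 2·b(n-2). -/

import Mathlib

/-- `l` is a permutation of `{1, ..., n}`, viewed as the sequence of its values. -/
def IsPermOf (l : List ℕ) (n : ℕ) : Prop := l.Perm (List.range' 1 n)

/-- `l` is B-avoiding: there are no indices `a < b < c < d` with
`max {l a, l c} < min {l b, l d}`. -/
def BAvoid (l : List ℕ) : Prop :=
  ∀ a b c d : Fin l.length, a < b → b < c → c < d →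
    ¬ (max (l.get a) (l.get c) < min (l.get b) (l.get d))

/-- the number of B-avoiding permutations of `{1, ..., n}`. -/
noncomputable def bcount (n : ℕ) : ℕ :=
  Nat.card {l : List ℕ // IsPermOf l n ∧ BAvoid l}

namespace BProof

/-- violation: a "small, big, small, big" pattern as a sublist. -/
def Viol (l : List ℕ) : Prop :=
  ∃ w x y z : ℕ, [w,x,y,z].Sublist l ∧ w < x ∧ w < z ∧ y < x ∧ y < z

theorem bavoid_iff_not_viol (l : List ℕ) : BAvoid l ↔ ¬ Viol l := by
  constructor
  · rintro hB ⟨w, x, y, z, hs, h1, h2, h3, h4⟩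
    obtain ⟨is, his, hp⟩ := List.sublist_eq_map_getElem hs
    match is, his with
    | [a, b, c, d], his =>
      simp only [List.map_cons, List.map_nil, List.cons.injEq, and_true] at his
      obtain ⟨hw, hx, hy, hz⟩ := his
      simp only [List.pairwise_cons, List.mem_cons, List.mem_singleton] at hp
      have hab : a < b := by
        have := hp.1 b (by simp); exact Fin.lt_def.2 this
      have hbc : b < c := by
        have := hp.2.1 c (by simp); exact Fin.lt_def.2 this
      have hcd : c < d := by
        have := hp.2.2.1 d (by simp); exact Fin.lt_def.2 this
      exact hB a b c d hab hbc hcd (by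
        subst hw hx hy hz
        simp only [max_lt_iff, lt_min_iff]
        exact ⟨⟨h1, h3⟩, h2, h4⟩)
  · intro hV a b c d hab hbc hcd hlt
    apply hV
    refine ⟨l.get a, l.get b, l.get c, l.get d, ?_, ?_, ?_, ?_, ?_⟩
    · have : List.map l.get [a,b,c,d] = [l.get a, l.get b, l.get c, l.get d] := by simp
      rw [← this]
      apply List.map_getElem_sublist
      simp only [List.pairwise_cons, List.mem_cons, List.mem_singleton]
      refine ⟨?_, ?_, ?_, ?_⟩
      · rintro x (rfl | rfl | rfl | h)
        · exact hab
        · exact hab.trans hbc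
        · exact (hab.trans (hbc.trans hcd))
        · simp at h
      · rintro x (rfl | rfl | h)
        · exact hbc
        · exact hbc.trans hcd
        · simp at h
      · rintro x (rfl | h)
        · exact hcd
        · simp at h
      · simp
    · simp only [max_lt_iff, lt_min_iff] at hlt; exact hlt.1.1
    · simp only [max_lt_iff, lt_min_iff] at hlt; exact hlt.2.1
    · simp only [max_lt_iff, lt_min_iff] at hlt; exact hlt.1.2
    · simp only [max_lt_iff, lt_min_iff] at hlt; exact hlt.2.2

/-- the set of B-avoiding permutations of `{1,...,n}`. -/
def A (n : ℕ) : Set (List ℕ) := {l | IsPermOf l n ∧ BAvoid l}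

theorem finite_A (n : ℕ) : (A n).Finite := by
  apply Set.Finite.subset (List.finite_toSet (List.range' 1 n).permutations)
  intro l hl
  exact List.mem_permutations.2 hl.1

theorem bcount_eq (n : ℕ) : bcount n = (A n).ncard := rfl

theorem mem_ge_one {n : ℕ} {p : List ℕ} (hp : p ∈ A n) {v : ℕ} (hv : v ∈ p) : 1 ≤ v := by
  have := (hp.1.mem_iff).1 hv
  exact (List.mem_range'_1.1 this).1

theorem mem_le {n : ℕ} {p : List ℕ} (hp : p ∈ A n) {v : ℕ} (hv : v ∈ p) : v ≤ n := by
  have := (hp.1.mem_iff).1 hv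
  have := (List.mem_range'_1.1 this).2
  omega

theorem nodup_of_mem {n : ℕ} {p : List ℕ} (hp : p ∈ A n) : p.Nodup :=
  (hp.1.symm).nodup (List.nodup_range' (s := 1) (n := n))

theorem length_of_mem {n : ℕ} {p : List ℕ} (hp : p ∈ A n) : p.length = n := by
  have := hp.1.length_eq
  simpa using this


/-! ### The three insertion maps -/

def h2 : ℕ → ℕ := fun v => if 2 ≤ v then v + 1 else v

def blk (b : Bool) : List ℕ := if b then [1, 2] else [2, 1]

def e1 (q : List ℕ) : List ℕ := q.map (· + 1) ++ [1]

def e2 (q : List ℕ) : List ℕ := q.map h2 ++ [2]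

def e3 (b : Bool) (q : List ℕ) : List ℕ :=
  q.flatMap (fun v => if v = 1 then blk b else [v + 1])

theorem h2_strictMono : StrictMono h2 := by
  intro a b hab
  simp only [h2]
  split <;> split <;> omega

theorem flatMap_one_free {b : Bool} {u : List ℕ} (h : 1 ∉ u) :
    u.flatMap (fun v => if v = 1 then blk b else [v + 1]) = u.map (· + 1) := by
  induction u with
  | nil => simp
  | cons a t ih =>
    simp only [List.mem_cons, not_or] at h
    rw [List.flatMap_cons, if_neg (fun hc => h.1 hc.symm), ih h.2]
    simp

theorem e3_eq {b : Bool} {u w : List ℕ} (hu : 1 ∉ u) (hw : 1 ∉ w) :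
    e3 b (u ++ 1 :: w) = u.map (· + 1) ++ blk b ++ w.map (· + 1) := by
  simp only [e3, List.flatMap_append, List.flatMap_cons, flatMap_one_free hu,
    flatMap_one_free hw, if_pos rfl]
  simp [List.append_assoc]

/-! ### Violation transfer: forward -/

theorem viol_lift {q p : List ℕ} {h : ℕ → ℕ}
    (hm : ∀ a ∈ q, ∀ b ∈ q, a < b → h a < h b)
    (hs : (q.map h).Sublist p) : Viol q → Viol p := by
  rintro ⟨w, x, y, z, hsub, h1, h2, h3, h4⟩
  have hmem : ∀ v ∈ [w,x,y,z], v ∈ q := fun v hv => hsub.subset hv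
  refine ⟨h w, h x, h y, h z, ?_, ?_, ?_, ?_, ?_⟩
  · have : List.map h [w,x,y,z] = [h w, h x, h y, h z] := by simp
    rw [← this]
    exact (hsub.map h).trans hs
  · exact hm w (hmem w (by simp)) x (hmem x (by simp)) h1
  · exact hm w (hmem w (by simp)) z (hmem z (by simp)) h2
  · exact hm y (hmem y (by simp)) x (hmem x (by simp)) h3
  · exact hm y (hmem y (by simp)) z (hmem z (by simp)) h4

theorem viol_e1 {q : List ℕ} : Viol q → Viol (e1 q) :=
  viol_lift (fun a _ b _ hab => by omega) (List.sublist_append_left _ _)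

theorem viol_e2 {q : List ℕ} : Viol q → Viol (e2 q) :=
  viol_lift (fun a _ b _ hab => h2_strictMono hab) (List.sublist_append_left _ _)

theorem viol_e3 {b : Bool} {u w : List ℕ} (hu : 1 ∉ u) (hw : 1 ∉ w)
    (hpos : ∀ v ∈ u ++ 1 :: w, 1 ≤ v) :
    Viol (u ++ 1 :: w) → Viol (e3 b (u ++ 1 :: w)) := by
  set h : ℕ → ℕ := fun v => if v = 1 then 1 else v + 1 with hh
  apply viol_lift (h := h)
  · intro a ha c hc hac
    have ha1 := hpos a ha
    simp only [hh]
    split <;> split <;> omega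
  · rw [e3_eq hu hw]
    have hmap : (u ++ 1 :: w).map h = u.map (· + 1) ++ 1 :: w.map (· + 1) := by
      simp only [List.map_append, List.map_cons]
      congr 1
      · apply List.map_congr_left
        intro a ha
        simp only [hh]
        rw [if_neg]; intro hcon; exact hu (hcon ▸ ha)
      · congr 1
        apply List.map_congr_left
        intro a ha
        simp only [hh]
        rw [if_neg]; intro hcon; exact hw (hcon ▸ ha)
    rw [hmap]
    have h1blk : [1].Sublist (blk b) := by
      cases b <;> simp [blk]
    have : u.map (· + 1) ++ 1 :: w.map (· + 1)
        = u.map (· + 1) ++ ([1] ++ w.map (· + 1)) := by simp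
    rw [this, List.append_assoc]
    exact List.Sublist.append (List.Sublist.refl _)
      (h1blk.append (List.Sublist.refl _))


/-! ### Violation transfer: backward -/

theorem quad_map {f : ℕ → ℕ} {l : List ℕ} {w x y z : ℕ} (h : [w,x,y,z] = l.map f) :
    ∃ a b c d, l = [a,b,c,d] ∧ w = f a ∧ x = f b ∧ y = f c ∧ z = f d := by
  rcases l with _|⟨a,_|⟨b,_|⟨c,_|⟨d,_|⟨e,t⟩⟩⟩⟩⟩
  · simp at h
  · simp at h
  · simp at h
  · simp at h
  · simp only [List.map_cons, List.map_nil, List.cons.injEq, and_true] at h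
    exact ⟨a, b, c, d, rfl, h.1, h.2.1, h.2.2.1, h.2.2.2⟩
  · simp at h

theorem viol_e1_back {q : List ℕ} : Viol (e1 q) → Viol q := by
  rintro ⟨va, vb, vc, vd, hsub, h1, h2, h3, h4⟩
  unfold e1 at hsub
  rw [List.sublist_append_iff] at hsub
  obtain ⟨s1, s2, heq, hs1, hs2⟩ := hsub
  have hmem1 : ∀ v ∈ s1, 1 ≤ v := by
    intro v hv
    have := hs1.subset hv
    simp only [List.mem_map] at this
    omega
  rcases s2 with _ | ⟨e, s2'⟩
  · rw [List.append_nil] at heq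
    rw [← heq, List.sublist_map_iff] at hs1
    obtain ⟨l', hl', hmap⟩ := hs1
    obtain ⟨a, b, c, d, rfl, ha, hb, hc, hd⟩ := quad_map hmap
    exact ⟨a, b, c, d, hl', by omega, by omega, by omega, by omega⟩
  · have he : e = 1 ∧ s2' = [] := by
      rcases List.sublist_cons_iff.1 hs2 with h | ⟨r, hr, hrs⟩
      · simp at h
      · simp only [List.cons.injEq] at hr
        exact ⟨hr.1, hr.2 ▸ List.sublist_nil.1 hrs⟩
    obtain ⟨rfl, rfl⟩ := he
    have heq' : ([va,vb,vc] : List ℕ) ++ [vd] = s1 ++ [1] := heq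
    obtain ⟨h31, h32⟩ := List.append_inj' heq' rfl
    have hvd : vd = 1 := by simpa using h32
    have := hmem1 vc (by rw [← h31]; simp)
    omega

theorem viol_e2_back {q : List ℕ} (hnd : (e2 q).Nodup) (hq : ∀ v ∈ q, 1 ≤ v) :
    Viol (e2 q) → Viol q := by
  rintro ⟨va, vb, vc, vd, hsub, q1, q2, q3, q4⟩
  have hquadnd : ([va, vb, vc, vd] : List ℕ).Nodup := hsub.nodup hnd
  have hac : va ≠ vc := by simp only [List.nodup_cons] at hquadnd; simp_all
  unfold e2 at hsub
  rw [List.sublist_append_iff] at hsub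
  obtain ⟨s1, s2, heq, hs1, hs2⟩ := hsub
  have hmem1 : ∀ v ∈ s1, 1 ≤ v := by
    intro v hv
    have := hs1.subset hv
    simp only [List.mem_map] at this
    obtain ⟨a, ha, rfl⟩ := this
    have := hq a ha
    have h2a : h2 a = if 2 ≤ a then a + 1 else a := rfl
    rw [h2a]; split <;> omega
  rcases s2 with _ | ⟨e, s2'⟩
  · rw [List.append_nil] at heq
    rw [← heq, List.sublist_map_iff] at hs1
    obtain ⟨l', hl', hmap⟩ := hs1
    obtain ⟨a, b, c, d, rfl, ha, hb, hc, hd⟩ := quad_map hmap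
    subst ha hb hc hd
    exact ⟨a, b, c, d, hl', h2_strictMono.lt_iff_lt.1 q1, h2_strictMono.lt_iff_lt.1 q2,
      h2_strictMono.lt_iff_lt.1 q3, h2_strictMono.lt_iff_lt.1 q4⟩
  · have he : e = 2 ∧ s2' = [] := by
      rcases List.sublist_cons_iff.1 hs2 with h | ⟨r, hr, hrs⟩
      · simp at h
      · simp only [List.cons.injEq] at hr
        exact ⟨hr.1, hr.2 ▸ List.sublist_nil.1 hrs⟩
    obtain ⟨rfl, rfl⟩ := he
    have heq' : ([va,vb,vc] : List ℕ) ++ [vd] = s1 ++ [2] := heq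
    obtain ⟨h31, h32⟩ := List.append_inj' heq' rfl
    have hvd : vd = 2 := by simpa using h32
    have hwa := hmem1 va (by rw [← h31]; simp)
    have hwc := hmem1 vc (by rw [← h31]; simp)
    omega

/-- core step for `e3` pull-back: the violation uses at most one element of the block. -/
theorem viol_e3_core {u w : List ℕ} (hu : ∀ v ∈ u, 2 ≤ v) (hw : ∀ v ∈ w, 2 ≤ v)
    {va vb vc vd e₀ : ℕ} (he : e₀ ≤ 2)
    (hsub : ([va,vb,vc,vd] : List ℕ).Sublist (u.map (· + 1) ++ [e₀] ++ w.map (· + 1)))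
    (h1 : va < vb) (h2 : va < vd) (h3 : vc < vb) (h4 : vc < vd)
    (hvb3 : 3 ≤ vb) (hvd3 : 3 ≤ vd) : Viol (u ++ 1 :: w) := by
  set g : ℕ → ℕ := fun v => if v ≤ 2 then 1 else v - 1 with hg
  have hmap : (u.map (· + 1) ++ [e₀] ++ w.map (· + 1)).map g = u ++ 1 :: w := by
    simp only [List.map_append, List.map_map, List.map_cons, List.map_nil]
    have hgu : u.map (g ∘ (· + 1)) = u := by
      conv_rhs => rw [← List.map_id u]
      apply List.map_congr_left
      intro a ha
      have := hu a ha
      simp only [Function.comp, hg, id]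
      rw [if_neg (by omega)]
      omega
    have hgw : w.map (g ∘ (· + 1)) = w := by
      conv_rhs => rw [← List.map_id w]
      apply List.map_congr_left
      intro a ha
      have := hw a ha
      simp only [Function.comp, hg, id]
      rw [if_neg (by omega)]
      omega
    rw [hgu, hgw]
    have : g e₀ = 1 := by simp only [hg]; rw [if_pos he]
    rw [this]
    simp
  refine ⟨g va, g vb, g vc, g vd, ?_, ?_, ?_, ?_, ?_⟩
  · have := hsub.map g
    rw [hmap] at this
    simpa using this
  · simp only [hg]
    split <;> [skip; skip] <;> rw [if_neg (by omega)] <;> omega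
  · simp only [hg]
    split <;> rw [if_neg (by omega)] <;> omega
  · simp only [hg]
    split <;> rw [if_neg (by omega)] <;> omega
  · simp only [hg]
    split <;> rw [if_neg (by omega)] <;> omega

theorem viol_e3_back {b : Bool} {u w : List ℕ}
    (hu : ∀ v ∈ u, 2 ≤ v) (hw : ∀ v ∈ w, 2 ≤ v)
    (hnd : (u.map (· + 1) ++ blk b ++ w.map (· + 1)).Nodup) :
    Viol (u.map (· + 1) ++ blk b ++ w.map (· + 1)) → Viol (u ++ 1 :: w) := by
  intro hV
  obtain ⟨va, vb, vc, vd, hsub0, h1, h2, h3, h4⟩ := hV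
  have hPmem : ∀ v ∈ (u.map (· + 1) ++ blk b ++ w.map (· + 1)), 1 ≤ v := by
    intro v hv
    simp only [List.mem_append, List.mem_map] at hv
    rcases hv with (⟨a, _, rfl⟩ | hv) | ⟨a, _, rfl⟩
    · omega
    · cases b <;> simp [blk] at hv <;> omega
    · omega
  have hquadnd : ([va, vb, vc, vd] : List ℕ).Nodup := hsub0.nodup hnd
  have hac : va ≠ vc := by simp only [List.nodup_cons] at hquadnd; simp_all
  have hva1 : 1 ≤ va := hPmem va (hsub0.subset (by simp))
  have hvc1 : 1 ≤ vc := hPmem vc (hsub0.subset (by simp))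
  have hvb3 : 3 ≤ vb := by omega
  have hvd3 : 3 ≤ vd := by omega
  rw [List.sublist_append_iff] at hsub0
  obtain ⟨s12, s3, heq, hs12, hs3⟩ := hsub0
  rw [List.sublist_append_iff] at hs12
  obtain ⟨s1, s2, heq12, hs1, hs2⟩ := hs12
  subst heq12
  have hm1 : ∀ v ∈ s1, 3 ≤ v := by
    intro v hv
    have := hs1.subset hv
    simp only [List.mem_map] at this
    obtain ⟨a, ha, rfl⟩ := this
    have := hu a ha; omega
  have hm3 : ∀ v ∈ s3, 3 ≤ v := by
    intro v hv
    have := hs3.subset hv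
    simp only [List.mem_map] at this
    obtain ⟨a, ha, rfl⟩ := this
    have := hw a ha; omega
  rcases s2 with _ | ⟨e, _ | ⟨e', t⟩⟩
  · -- s2 = []
    apply viol_e3_core hu hw (show (1:ℕ) ≤ 2 by norm_num) ?_ h1 h2 h3 h4 hvb3 hvd3
    rw [heq]
    exact (hs1.append (List.nil_sublist [1])).append hs3
  · -- s2 = [e]
    have he2 : e ≤ 2 := by
      have hmem : e ∈ blk b := hs2.subset (List.mem_singleton_self e)
      cases b <;> simp [blk] at hmem <;> omega
    apply viol_e3_core hu hw he2 ?_ h1 h2 h3 h4 hvb3 hvd3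
    rw [heq]
    exact (hs1.append (List.Sublist.refl [e])).append hs3
  · -- s2 has two elements: contradiction
    exfalso
    have ht : t = [] := by
      have hb2 : (blk b).length = 2 := by cases b <;> rfl
      have hl := hs2.length_le
      rw [hb2] at hl
      simp only [List.length_cons] at hl
      exact List.length_eq_zero_iff.1 (by omega)
    subst ht
    have hs2' : (e :: e' :: ([] : List ℕ)) = blk b := by
      apply hs2.eq_of_length
      cases b <;> simp [blk]
    have hee : (e = 1 ∧ e' = 2) ∨ (e = 2 ∧ e' = 1) := by
      cases b <;> simp [blk] at hs2' <;> [exact Or.inr hs2'; exact Or.inl hs2']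
    rcases s1 with _|⟨a,_|⟨a',_|⟨a'',t'⟩⟩⟩ <;>
      simp only [List.cons_append, List.nil_append, List.cons.injEq] at heq
    · obtain ⟨hA, hB, -⟩ := heq
      rcases hee with ⟨rfl, rfl⟩ | ⟨rfl, rfl⟩ <;> omega
    · obtain ⟨hA, hB, hC, -⟩ := heq
      rcases hee with ⟨rfl, rfl⟩ | ⟨rfl, rfl⟩ <;> omega
    · obtain ⟨hA, hB, hC, hD, -⟩ := heq
      rcases hee with ⟨rfl, rfl⟩ | ⟨rfl, rfl⟩ <;> omega
    · obtain ⟨-, -, -, hD⟩ := heq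
      have := congrArg List.length hD
      simp at this
      omega

/-! ### range' helpers -/

theorem map_add_one_range' (s n : ℕ) :
    (List.range' s n).map (· + 1) = List.range' (s+1) n := by
  have h := List.map_add_range' (a := 1) s n 1
  rw [show 1 + s = s + 1 by omega] at h
  rw [← h]
  apply List.map_congr_left
  intro a _
  omega

theorem map_sub_one_range' (s n : ℕ) :
    (List.range' (s+1) n).map (· - 1) = List.range' s n := by
  rw [← map_add_one_range' s n, List.map_map]
  conv_rhs => rw [← List.map_id (List.range' s n)]
  apply List.map_congr_left
  intro a _
  simp

/-! ### last value -/

def Lst (l : List ℕ) : ℕ := l.getLastD 0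

theorem Lst_concat (t : List ℕ) (a : ℕ) : Lst (t ++ [a]) = a :=
  List.getLastD_concat

theorem Lst_mem {l : List ℕ} (h : l ≠ []) : Lst l ∈ l := by
  obtain ⟨t, k, rfl⟩ : ∃ t k, l = t ++ [k] :=
    ⟨l.dropLast, l.getLast h, (l.dropLast_append_getLast h).symm⟩
  rw [Lst_concat]
  simp

theorem ne_nil_of_mem_A {n : ℕ} {p : List ℕ} (hp : p ∈ A (n+1)) : p ≠ [] := by
  intro h
  have := length_of_mem hp
  rw [h] at this
  simp at this

/-! ### perm transport -/

theorem e1_perm {q : List ℕ} {n : ℕ} (h : q.Perm (List.range' 1 n)) :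
    (e1 q).Perm (List.range' 1 (n+1)) := by
  unfold e1
  have h1 : (q.map (· + 1)).Perm (List.range' 2 n) := by
    have := h.map (· + 1)
    rwa [map_add_one_range'] at this
  have step1 : (q.map (· + 1) ++ [1]).Perm (1 :: q.map (· + 1)) :=
    List.perm_append_singleton _ _
  have step2 : (1 :: q.map (· + 1)).Perm (1 :: List.range' 2 n) := h1.cons 1
  have step3 : (1 : ℕ) :: List.range' 2 n = List.range' 1 (n+1) :=
    (List.range'_succ (s := 1) (n := n) (step := 1)).symm
  exact step3 ▸ (step1.trans step2)

theorem e2_perm {q : List ℕ} {m : ℕ} (h : q.Perm (List.range' 1 (m+1))) :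
    (e2 q).Perm (List.range' 1 (m+2)) := by
  unfold e2
  have hr : List.range' 1 (m+2) = 1 :: 2 :: List.range' 3 m := by
    rw [List.range'_succ, List.range'_succ]
  have h1 : (q.map h2).Perm (1 :: List.range' 3 m) := by
    have := h.map h2
    rw [List.range'_succ] at this
    simp only [List.map_cons] at this
    have h2one : h2 1 = 1 := rfl
    rw [h2one] at this
    have hmr : (List.range' 2 m).map h2 = List.range' 3 m := by
      rw [← map_add_one_range' 2 m]
      apply List.map_congr_left
      intro a ha
      have := (List.mem_range'_1.1 ha).1
      show (if 2 ≤ a then a + 1 else a) = a + 1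
      rw [if_pos this]
    rwa [hmr] at this
  have step1 : (q.map h2 ++ [2]).Perm (2 :: q.map h2) :=
    List.perm_append_singleton _ _
  have step2 : ((2:ℕ) :: q.map h2).Perm (2 :: 1 :: List.range' 3 m) := h1.cons 2
  have step3 : ((2:ℕ) :: 1 :: List.range' 3 m).Perm (1 :: 2 :: List.range' 3 m) :=
    List.Perm.swap 1 2 _
  exact hr ▸ ((step1.trans step2).trans step3)

theorem e3_perm {b : Bool} {q : List ℕ} {m : ℕ} (h : q.Perm (List.range' 1 (m+1))) :
    (e3 b q).Perm (List.range' 1 (m+2)) := by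
  have hr : List.range' 1 (m+2) = 1 :: 2 :: List.range' 3 m := by
    rw [List.range'_succ, List.range'_succ]
  have h1 : (e3 b q).Perm (e3 b (List.range' 1 (m+1))) :=
    List.Perm.flatMap_right _ h
  have h2' : e3 b (List.range' 1 (m+1)) = blk b ++ List.range' 3 m := by
    rw [List.range'_succ]
    show e3 b (1 :: List.range' 2 m) = _
    have hnotone : (1:ℕ) ∉ List.range' 2 m := by
      intro hmem
      have := (List.mem_range'_1.1 hmem).1
      omega
    unfold e3
    rw [List.flatMap_cons, if_pos rfl, flatMap_one_free hnotone, map_add_one_range']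
  have h3' : (blk b).Perm [1, 2] := by
    cases b
    · show ([2,1] : List ℕ).Perm [1,2]
      exact List.Perm.swap 1 2 []
    · exact List.Perm.refl _
  have step1 : (e3 b q).Perm (blk b ++ List.range' 3 m) := by
    rw [← h2']; exact h1
  have step2 : (blk b ++ List.range' 3 m).Perm ([1,2] ++ List.range' 3 m) :=
    h3'.append_right _
  have step3 : ([1,2] : List ℕ) ++ List.range' 3 m = List.range' 1 (m+2) := by
    rw [hr]; rfl
  exact step3 ▸ (step1.trans step2)

/-! ### membership transport -/

theorem e1_mem {q : List ℕ} {n : ℕ} (hq : q ∈ A n) : e1 q ∈ A (n+1) := by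
  refine ⟨e1_perm hq.1, ?_⟩
  rw [bavoid_iff_not_viol]
  intro hV
  exact (bavoid_iff_not_viol q).1 hq.2 (viol_e1_back hV)

theorem e2_mem {q : List ℕ} {m : ℕ} (hq : q ∈ A (m+1)) : e2 q ∈ A (m+2) := by
  have hperm := e2_perm hq.1
  refine ⟨hperm, ?_⟩
  rw [bavoid_iff_not_viol]
  intro hV
  have hnd : (e2 q).Nodup := hperm.symm.nodup (List.nodup_range' (s := 1) (n := m+2))
  exact (bavoid_iff_not_viol q).1 hq.2
    (viol_e2_back hnd (fun v hv => mem_ge_one hq hv) hV)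

theorem split_at_one {q : List ℕ} {m : ℕ} (hq : q ∈ A (m+1)) :
    ∃ u w, q = u ++ 1 :: w ∧ 1 ∉ u ∧ 1 ∉ w := by
  have h1 : (1:ℕ) ∈ q := by
    rw [hq.1.mem_iff]
    rw [List.mem_range'_1]
    omega
  obtain ⟨u, w, rfl⟩ := List.append_of_mem h1
  have hnd := nodup_of_mem hq
  rw [List.nodup_append] at hnd
  refine ⟨u, w, rfl, ?_, ?_⟩
  · intro h1u
    exact hnd.2.2 _ h1u _ (by simp) rfl
  · have := hnd.2.1
    simp only [List.nodup_cons] at this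
    exact this.1

theorem e3_mem {b : Bool} {q : List ℕ} {m : ℕ} (hq : q ∈ A (m+1)) :
    e3 b q ∈ A (m+2) := by
  have hperm := e3_perm (b := b) hq.1
  refine ⟨hperm, ?_⟩
  rw [bavoid_iff_not_viol]
  intro hV
  obtain ⟨u, w, rfl, hu1, hw1⟩ := split_at_one hq
  have hu2 : ∀ v ∈ u, 2 ≤ v := by
    intro v hv
    have h1 := mem_ge_one hq (show v ∈ u ++ 1 :: w by simp [hv])
    have : v ≠ 1 := fun h => hu1 (h ▸ hv)
    omega
  have hw2 : ∀ v ∈ w, 2 ≤ v := by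
    intro v hv
    have h1 := mem_ge_one hq (show v ∈ u ++ 1 :: w by simp [hv])
    have : v ≠ 1 := fun h => hw1 (h ▸ hv)
    omega
  rw [e3_eq hu1 hw1] at hV
  have hnd : (u.map (· + 1) ++ blk b ++ w.map (· + 1)).Nodup := by
    have := hperm.symm.nodup (List.nodup_range' (s := 1) (n := m+2))
    rwa [e3_eq hu1 hw1] at this
  exact (bavoid_iff_not_viol _).1 hq.2 (viol_e3_back hu2 hw2 hnd hV)

theorem Lst_e1 (q : List ℕ) : Lst (e1 q) = 1 := Lst_concat _ _

theorem Lst_e2 (q : List ℕ) : Lst (e2 q) = 2 := Lst_concat _ _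

theorem Lst_e3 {b : Bool} {q : List ℕ} (hq : q ≠ []) (h2 : 2 ≤ Lst q) :
    Lst (e3 b q) = Lst q + 1 := by
  obtain ⟨t, k, rfl⟩ : ∃ t k, q = t ++ [k] :=
    ⟨q.dropLast, q.getLast hq, (q.dropLast_append_getLast hq).symm⟩
  rw [Lst_concat] at h2 ⊢
  unfold e3
  rw [List.flatMap_append, List.flatMap_cons, if_neg (by omega), List.flatMap_nil,
    List.append_nil]
  exact Lst_concat _ _

/-! ### building a violating quadruple -/

theorem quad_sublist (u v w x y : List ℕ) (a b c d : ℕ) :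
    ([a,b,c,d] : List ℕ).Sublist (u ++ a :: (v ++ b :: (w ++ c :: (x ++ d :: y)))) := by
  have h4 : ([d] : List ℕ).Sublist (x ++ d :: y) :=
    (List.cons_sublist_cons.2 (List.nil_sublist y)).trans (List.sublist_append_right x _)
  have h3 : ([c,d] : List ℕ).Sublist (w ++ c :: (x ++ d :: y)) :=
    (List.cons_sublist_cons.2 h4).trans (List.sublist_append_right w _)
  have h2 : ([b,c,d] : List ℕ).Sublist (v ++ b :: (w ++ c :: (x ++ d :: y))) :=
    (List.cons_sublist_cons.2 h3).trans (List.sublist_append_right v _)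
  exact (List.cons_sublist_cons.2 h2).trans (List.sublist_append_right u _)

/-! ### decompositions -/

theorem dec1 {n : ℕ} {p : List ℕ} (hp : p ∈ A (n+1)) (hl : Lst p = 1) :
    ∃ q ∈ A n, p = e1 q := by
  have hne := ne_nil_of_mem_A hp
  obtain ⟨t, k, rfl⟩ : ∃ t k, p = t ++ [k] :=
    ⟨p.dropLast, p.getLast hne, (p.dropLast_append_getLast hne).symm⟩
  rw [Lst_concat] at hl
  subst hl
  have hnd := nodup_of_mem hp
  rw [List.nodup_append] at hnd
  have h1t : (1:ℕ) ∉ t := fun h => hnd.2.2 _ h _ (by simp) rfl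
  have ht2 : ∀ v ∈ t, 2 ≤ v := by
    intro v hv
    have h1 := mem_ge_one hp (show v ∈ t ++ [1] by simp [hv])
    have : v ≠ 1 := fun h => h1t (h ▸ hv)
    omega
  refine ⟨t.map (· - 1), ⟨?_, ?_⟩, ?_⟩
  · -- perm
    have hperm : (t ++ [1]).Perm (1 :: List.range' 2 n) := by
      have h0 : (t ++ [1]).Perm (List.range' 1 (n+1)) := hp.1
      rwa [List.range'_succ] at h0
    have ht : t.Perm (List.range' 2 n) := by
      rw [← List.perm_cons 1]
      exact ((List.perm_append_singleton 1 t).symm.trans hperm)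
    have := ht.map (· - 1)
    rwa [show (2:ℕ) = 1 + 1 by rfl, map_sub_one_range'] at this
  · -- BAvoid
    rw [bavoid_iff_not_viol]
    intro hV
    apply (bavoid_iff_not_viol _).1 hp.2
    have hsub : ((t.map (· - 1)).map (· + 1)) ++ [1] = t ++ [1] := by
      congr 1
      rw [List.map_map]
      conv_rhs => rw [← List.map_id t]
      apply List.map_congr_left
      intro a ha
      have := ht2 a ha
      simp; omega
    have := viol_e1 (q := t.map (· - 1)) hV
    unfold e1 at this
    rwa [hsub] at this
  · -- p = e1 q
    unfold e1
    congr 1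
    rw [List.map_map]
    conv_lhs => rw [← List.map_id t]
    apply List.map_congr_left
    intro a ha
    have := ht2 a ha
    simp; omega

theorem dec2 {m : ℕ} {p : List ℕ} (hp : p ∈ A (m+2)) (hl : Lst p = 2) :
    ∃ q ∈ A (m+1), p = e2 q := by
  have hne := ne_nil_of_mem_A hp
  obtain ⟨t, k, rfl⟩ : ∃ t k, p = t ++ [k] :=
    ⟨p.dropLast, p.getLast hne, (p.dropLast_append_getLast hne).symm⟩
  rw [Lst_concat] at hl
  subst hl
  have hnd := nodup_of_mem hp
  rw [List.nodup_append] at hnd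
  have h2t : (2:ℕ) ∉ t := fun h => hnd.2.2 _ h _ (by simp) rfl
  have ht2 : ∀ v ∈ t, 1 ≤ v ∧ v ≠ 2 := by
    intro v hv
    have h1 := mem_ge_one hp (show v ∈ t ++ [2] by simp [hv])
    exact ⟨h1, fun h => h2t (h ▸ hv)⟩
  set g2 : ℕ → ℕ := fun v => if 3 ≤ v then v - 1 else v with hg2
  have hback : (t.map g2).map h2 = t := by
    rw [List.map_map]
    conv_rhs => rw [← List.map_id t]
    apply List.map_congr_left
    intro a ha
    obtain ⟨ha1, ha2⟩ := ht2 a ha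
    show h2 (g2 a) = a
    simp only [hg2, h2]
    split <;> split <;> omega
  refine ⟨t.map g2, ⟨?_, ?_⟩, ?_⟩
  · -- perm
    have hperm : (t ++ [2]).Perm (1 :: 2 :: List.range' 3 m) := by
      have h0 : (t ++ [2]).Perm (List.range' 1 (m+2)) := hp.1
      rwa [List.range'_succ, List.range'_succ] at h0
    have ht : t.Perm (1 :: List.range' 3 m) := by
      rw [← List.perm_cons 2]
      refine ((List.perm_append_singleton 2 t).symm.trans hperm).trans ?_
      exact List.Perm.swap 2 1 _
    have := ht.map g2
    have hg2r : (1 :: List.range' 3 m).map g2 = 1 :: List.range' 2 m := by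
      simp only [List.map_cons]
      congr 1
      have : (List.range' 3 m).map g2 = (List.range' 3 m).map (· - 1) := by
        apply List.map_congr_left
        intro a ha
        have := (List.mem_range'_1.1 ha).1
        simp only [hg2]
        rw [if_pos (by omega)]
      rw [this, show (3:ℕ) = 2 + 1 by rfl, map_sub_one_range']
    rw [hg2r] at this
    rwa [show (1:ℕ) :: List.range' 2 m = List.range' 1 (m+1) from (List.range'_succ (s := 1) (n := m) (step := 1)).symm] at this
  · -- BAvoid
    rw [bavoid_iff_not_viol]
    intro hV
    apply (bavoid_iff_not_viol _).1 hp.2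
    have := viol_e2 (q := t.map g2) hV
    unfold e2 at this
    rwa [hback] at this
  · unfold e2
    rw [hback]

theorem dec3 {m : ℕ} {p : List ℕ} (hp : p ∈ A (m+2)) (hl : 3 ≤ Lst p) :
    ∃ b q, q ∈ A (m+1) ∧ 2 ≤ Lst q ∧ p = e3 b q := by
  have hne := ne_nil_of_mem_A hp
  have hnodup := nodup_of_mem hp
  -- split at the value 1
  have h1p : (1:ℕ) ∈ p := by
    rw [hp.1.mem_iff, List.mem_range'_1]; omega
  have h2p : (2:ℕ) ∈ p := by
    rw [hp.1.mem_iff, List.mem_range'_1]; omega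
  obtain ⟨u, v, rfl⟩ := List.append_of_mem h1p
  have hnd := hnodup
  rw [List.nodup_append] at hnd
  have h1u : (1:ℕ) ∉ u := fun h => hnd.2.2 _ h _ (by simp) rfl
  have h1v : (1:ℕ) ∉ v := by
    have := hnd.2.1
    simp only [List.nodup_cons] at this
    exact this.1
  -- not-viol of p
  have hnv : ¬ Viol (u ++ 1 :: v) := (bavoid_iff_not_viol _).1 hp.2
  -- key adjacency claim
  have hadj : ∃ u' w' b, (u ++ 1 :: v) = u' ++ blk b ++ w' ∧
      (1:ℕ) ∉ u' ∧ (1:ℕ) ∉ w' ∧ (2:ℕ) ∉ u' ∧ (2:ℕ) ∉ w' := by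
    rcases List.mem_append.1 h2p with h2u | h2v
    · -- 2 ∈ u
      obtain ⟨s, t, rfl⟩ := List.append_of_mem h2u
      have h2s : (2:ℕ) ∉ s := by
        have h' := hnd.1
        rw [List.nodup_append] at h'
        exact fun h => h'.2.2 _ h _ (by simp) rfl
      have h2t : (2:ℕ) ∉ t := by
        have h' := hnd.1
        rw [List.nodup_append] at h'
        have := h'.2.1
        simp only [List.nodup_cons] at this
        exact this.1
      have h2v' : (2:ℕ) ∉ v := by
        have h' := hnd.2.2 _ (show (2:ℕ) ∈ s ++ 2 :: t by simp)
        exact fun h => h' _ (List.mem_cons.2 (Or.inr h)) rfl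
      rcases t with _ | ⟨a, t'⟩
      · refine ⟨s, v, false, by simp [blk], fun h => h1u (by simp [h]), h1v, h2s, h2v'⟩
      · exfalso
        have hamem : a ∈ (s ++ 2 :: a :: t') ++ 1 :: v := by simp
        have ha1 : a ≠ 1 := fun h => h1u (by simp [h])
        have ha2 : a ≠ 2 := fun h => h2t (by simp [h])
        have ha : 3 ≤ a := by
          have := mem_ge_one hp hamem
          omega
        have hvne : v ≠ [] := by
          intro h
          subst h
          rw [show (s ++ 2 :: (a :: t')) ++ 1 :: ([]:List ℕ)
              = (s ++ 2 :: (a :: t')) ++ [1] by rfl, Lst_concat] at hl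
          omega
        obtain ⟨c, L, rfl⟩ : ∃ c L, v = c ++ [L] :=
          ⟨v.dropLast, v.getLast hvne, (v.dropLast_append_getLast hvne).symm⟩
        have hLst : Lst ((s ++ 2 :: (a :: t')) ++ 1 :: (c ++ [L])) = L := by
          rw [show (s ++ 2 :: (a :: t')) ++ 1 :: (c ++ [L])
              = ((s ++ 2 :: (a :: t')) ++ 1 :: c) ++ [L] by simp, Lst_concat]
        rw [hLst] at hl
        apply hnv
        refine ⟨2, a, 1, L, ?_, by omega, by omega, by omega, by omega⟩
        have := quad_sublist s [] t' c ([] : List ℕ) 2 a 1 L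
        simpa using this
    · -- 2 ∈ v
      have h2v2 : (2:ℕ) ∈ v := by
        rcases List.mem_cons.1 h2v with h | h
        · exact absurd h (by norm_num)
        · exact h
      obtain ⟨s, t, rfl⟩ := List.append_of_mem h2v2
      have hv' : (1 :: (s ++ 2 :: t)).Nodup := hnd.2.1
      have h2s : (2:ℕ) ∉ s := by
        simp only [List.nodup_cons] at hv'
        have := hv'.2
        rw [List.nodup_append] at this
        exact fun h => this.2.2 _ h _ (by simp) rfl
      have h2t : (2:ℕ) ∉ t := by
        simp only [List.nodup_cons] at hv'
        have := hv'.2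
        rw [List.nodup_append] at this
        have := this.2.1
        simp only [List.nodup_cons] at this
        exact this.1
      have h2u' : (2:ℕ) ∉ u := fun h => hnd.2.2 _ h _ (by simp) rfl
      rcases s with _ | ⟨a, s'⟩
      · exact ⟨u, t, true, by simp [blk], h1u, fun h => h1v (by simp [h]), h2u', h2t⟩
      · exfalso
        have hamem : a ∈ u ++ 1 :: ((a :: s') ++ 2 :: t) := by simp
        have ha1 : a ≠ 1 := fun h => h1v (by simp [h])
        have ha2 : a ≠ 2 := fun h => h2s (by simp [h])
        have ha : 3 ≤ a := by
          have := mem_ge_one hp hamem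
          omega
        have htne : t ≠ [] := by
          intro h
          subst h
          rw [show u ++ 1 :: ((a :: s') ++ 2 :: ([]:List ℕ))
              = (u ++ 1 :: (a :: s')) ++ [2] by simp, Lst_concat] at hl
          omega
        obtain ⟨c, L, rfl⟩ : ∃ c L, t = c ++ [L] :=
          ⟨t.dropLast, t.getLast htne, (t.dropLast_append_getLast htne).symm⟩
        have hLst : Lst (u ++ 1 :: ((a :: s') ++ 2 :: (c ++ [L]))) = L := by
          rw [show u ++ 1 :: ((a :: s') ++ 2 :: (c ++ [L]))
              = (u ++ 1 :: ((a :: s') ++ 2 :: c)) ++ [L] by simp, Lst_concat]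
        rw [hLst] at hl
        apply hnv
        refine ⟨1, a, 2, L, ?_, by omega, by omega, by omega, by omega⟩
        have := quad_sublist u ([] : List ℕ) s' c ([] : List ℕ) 1 a 2 L
        simpa using this
  -- step C: build q from the decomposition
  obtain ⟨u', w', b, heq, h1u', h1w', h2u', h2w'⟩ := hadj
  rw [heq] at hp hnv hl ⊢
  clear heq h1p h2p hnd h1u h1v hnodup hne
  have hu3 : ∀ x ∈ u', 3 ≤ x := by
    intro x hx
    have h1 := mem_ge_one hp (show x ∈ u' ++ blk b ++ w' by simp [hx])
    have hx1 : x ≠ 1 := fun h => h1u' (h ▸ hx)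
    have hx2 : x ≠ 2 := fun h => h2u' (h ▸ hx)
    omega
  have hw3 : ∀ x ∈ w', 3 ≤ x := by
    intro x hx
    have h1 := mem_ge_one hp (show x ∈ u' ++ blk b ++ w' by simp [hx])
    have hx1 : x ≠ 1 := fun h => h1w' (h ▸ hx)
    have hx2 : x ≠ 2 := fun h => h2w' (h ▸ hx)
    omega
  set q : List ℕ := u'.map (· - 1) ++ 1 :: w'.map (· - 1) with hq
  have h1mu : (1:ℕ) ∉ u'.map (· - 1) := by
    simp only [List.mem_map, not_exists, not_and]
    intro x hx
    have := hu3 x hx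
    omega
  have h1mw : (1:ℕ) ∉ w'.map (· - 1) := by
    simp only [List.mem_map, not_exists, not_and]
    intro x hx
    have := hw3 x hx
    omega
  have hmapu : (u'.map (· - 1)).map (· + 1) = u' := by
    rw [List.map_map]
    conv_rhs => rw [← List.map_id u']
    apply List.map_congr_left
    intro a ha
    have := hu3 a ha
    simp; omega
  have hmapw : (w'.map (· - 1)).map (· + 1) = w' := by
    rw [List.map_map]
    conv_rhs => rw [← List.map_id w']
    apply List.map_congr_left
    intro a ha
    have := hw3 a ha
    simp; omega
  have hpe : u' ++ blk b ++ w' = e3 b q := by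
    rw [hq, e3_eq h1mu h1mw, hmapu, hmapw]
  -- the blk is a perm of [1,2]
  have hblk : (blk b).Perm [1,2] := by
    cases b
    · show ([2,1] : List ℕ).Perm [1,2]
      exact List.Perm.swap 1 2 []
    · exact List.Perm.refl _
  -- u' ++ w' is a permutation of range' 3 m
  have hA : (u' ++ blk b ++ w').Perm (1 :: 2 :: List.range' 3 m) := by
    have h0 : (u' ++ blk b ++ w').Perm (List.range' 1 (m+2)) := hp.1
    rwa [List.range'_succ, List.range'_succ] at h0
  have hB : (u' ++ blk b ++ w').Perm (1 :: 2 :: (u' ++ w')) := by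
    have s1 : ((u' ++ blk b) ++ w').Perm ((blk b ++ u') ++ w') :=
      (List.perm_append_comm).append_right w'
    have s2 : ((blk b ++ u') ++ w') = blk b ++ (u' ++ w') := by
      rw [List.append_assoc]
    have s3 : (blk b ++ (u' ++ w')).Perm ([1,2] ++ (u' ++ w')) :=
      hblk.append_right _
    exact (s1.trans (s2 ▸ List.Perm.refl _)).trans s3
  have huw : (u' ++ w').Perm (List.range' 3 m) := by
    have := (hB.symm.trans hA)
    rw [List.perm_cons, List.perm_cons] at this
    exact this
  have hqperm : q.Perm (List.range' 1 (m+1)) := by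
    have s1 : q.Perm (1 :: (u'.map (· - 1) ++ w'.map (· - 1))) := by
      rw [hq]
      exact List.perm_middle
    have s2 : (u'.map (· - 1) ++ w'.map (· - 1)) = (u' ++ w').map (· - 1) := by
      rw [List.map_append]
    have s3 : ((u' ++ w').map (· - 1)).Perm ((List.range' 3 m).map (· - 1)) :=
      huw.map _
    have s4 : (List.range' 3 m).map (· - 1) = List.range' 2 m :=
      map_sub_one_range' 2 m
    have s5 : (1:ℕ) :: List.range' 2 m = List.range' 1 (m+1) :=
      (List.range'_succ (s := 1) (n := m) (step := 1)).symm
    refine (s1.trans ?_)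
    rw [s2, ← s5]
    refine List.Perm.cons 1 ?_
    rw [← s4]
    exact s3
  have hqav : BAvoid q := by
    rw [bavoid_iff_not_viol]
    intro hV
    apply hnv
    rw [hpe]
    have hpos : ∀ x ∈ u'.map (· - 1) ++ 1 :: w'.map (· - 1), 1 ≤ x := by
      intro x hx
      simp only [List.mem_append, List.mem_cons, List.mem_map] at hx
      rcases hx with ⟨a, ha, rfl⟩ | rfl | ⟨a, ha, rfl⟩
      · have := hu3 a ha; omega
      · omega
      · have := hw3 a ha; omega
    exact viol_e3 h1mu h1mw hpos hV
  -- last value of q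
  have hwne : w' ≠ [] := by
    intro h
    subst h
    have : Lst (u' ++ blk b ++ []) ≤ 2 := by
      rw [List.append_nil]
      cases b
      · rw [show u' ++ blk false = u' ++ [2] ++ [1] by simp [blk], Lst_concat]
        omega
      · rw [show u' ++ blk true = u' ++ [1] ++ [2] by simp [blk], Lst_concat]
    omega
  obtain ⟨c, L, rfl⟩ : ∃ c L, w' = c ++ [L] :=
    ⟨w'.dropLast, w'.getLast hwne, (w'.dropLast_append_getLast hwne).symm⟩
  have hL3 : 3 ≤ L := by
    rwa [show u' ++ blk b ++ (c ++ [L]) = (u' ++ blk b ++ c) ++ [L] by simp,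
      Lst_concat] at hl
  have hLq : Lst q = L - 1 := by
    rw [hq, show (c ++ [L]).map (· - 1) = c.map (· - 1) ++ [L-1] by simp,
      show u'.map (· - 1) ++ 1 :: (c.map (· - 1) ++ [L-1])
        = (u'.map (· - 1) ++ 1 :: c.map (· - 1)) ++ [L-1] by simp,
      Lst_concat]
  exact ⟨b, q, ⟨hqperm, hqav⟩, by omega, hpe⟩

/-! ### injectivity -/

theorem map_succ_pred (l : List ℕ) : (l.map (· + 1)).map (· - 1) = l := by
  rw [List.map_map]
  conv_rhs => rw [← List.map_id l]
  apply List.map_congr_left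
  intro a _
  simp

def ginv : ℕ → ℕ := fun v => if 3 ≤ v then v - 1 else v

theorem map_h2_inv (l : List ℕ) : (l.map h2).map ginv = l := by
  rw [List.map_map]
  conv_rhs => rw [← List.map_id l]
  apply List.map_congr_left
  intro a _
  show ginv (h2 a) = a
  have e1 : h2 a = if 2 ≤ a then a + 1 else a := rfl
  have e2 : ∀ x, ginv x = if 3 ≤ x then x - 1 else x := fun _ => rfl
  rw [e2, e1]
  split_ifs <;> omega

theorem e1_inj {a b : List ℕ} (h : e1 a = e1 b) : a = b := by
  unfold e1 at h
  have h' := (List.append_inj' h rfl).1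
  have := congrArg (List.map (· - 1)) h'
  rwa [map_succ_pred, map_succ_pred] at this

theorem e2_inj {a b : List ℕ} (h : e2 a = e2 b) : a = b := by
  unfold e2 at h
  have h' := (List.append_inj' h rfl).1
  have := congrArg (List.map ginv) h'
  rwa [map_h2_inv, map_h2_inv] at this

theorem merge_e3 {b : Bool} {q : List ℕ} {m : ℕ} (hq : q ∈ A (m+1)) :
    ((e3 b q).erase 2).map ginv = q := by
  obtain ⟨u, w, rfl, hu1, hw1⟩ := split_at_one hq
  have hu2 : ∀ v ∈ u, 2 ≤ v := by
    intro v hv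
    have h1 := mem_ge_one hq (show v ∈ u ++ 1 :: w by simp [hv])
    have : v ≠ 1 := fun h => hu1 (h ▸ hv)
    omega
  have hw2 : ∀ v ∈ w, 2 ≤ v := by
    intro v hv
    have h1 := mem_ge_one hq (show v ∈ u ++ 1 :: w by simp [hv])
    have : v ≠ 1 := fun h => hw1 (h ▸ hv)
    omega
  rw [e3_eq hu1 hw1, List.append_assoc]
  have h2u : (2:ℕ) ∉ u.map (· + 1) := by
    simp only [List.mem_map, not_exists, not_and]
    intro x hx
    have := hu2 x hx
    omega
  rw [List.erase_append_right _ h2u]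
  have hblk : (blk b ++ w.map (· + 1)).erase 2 = 1 :: w.map (· + 1) := by
    cases b
    · show (((2:ℕ) :: 1 :: w.map (· + 1))).erase 2 = _
      rw [List.erase_cons_head]
    · show (((1:ℕ) :: 2 :: w.map (· + 1))).erase 2 = _
      rw [List.erase_cons_tail (by simp), List.erase_cons_head]
  rw [hblk]
  have hgu : (u.map (· + 1)).map ginv = u := by
    rw [List.map_map]
    conv_rhs => rw [← List.map_id u]
    apply List.map_congr_left
    intro a ha
    have := hu2 a ha
    show ginv (a + 1) = a
    have e2 : ginv (a+1) = if 3 ≤ a + 1 then a + 1 - 1 else a + 1 := rfl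
    rw [e2, if_pos (by omega)]
    omega
  have hgw : (w.map (· + 1)).map ginv = w := by
    rw [List.map_map]
    conv_rhs => rw [← List.map_id w]
    apply List.map_congr_left
    intro a ha
    have := hw2 a ha
    show ginv (a + 1) = a
    have e2 : ginv (a+1) = if 3 ≤ a + 1 then a + 1 - 1 else a + 1 := rfl
    rw [e2, if_pos (by omega)]
    omega
  rw [List.map_append, List.map_cons, hgu, hgw]
  rfl

/-- two distinct values appear in a unique relative order in a `Nodup` list. -/
theorem no_both {p : List ℕ} (h : p.Nodup) {a b : ℕ}
    (h1 : ([a,b] : List ℕ).Sublist p) (h2 : ([b,a] : List ℕ).Sublist p) : a = b := by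
  induction p with
  | nil => simp at h1
  | cons hd tl ih =>
    simp only [List.nodup_cons] at h
    rcases List.sublist_cons_iff.1 h1 with hs1 | ⟨r1, hr1, hrs1⟩
    · rcases List.sublist_cons_iff.1 h2 with hs2 | ⟨r2, hr2, hrs2⟩
      · exact ih h.2 hs1 hs2
      · -- b = hd, [a] <+ tl from hrs2 ; also [a,b] <+ tl so b ∈ tl
        simp only [List.cons.injEq] at hr2
        obtain ⟨rfl, rfl⟩ := hr2
        exfalso
        exact h.1 (hs1.subset (by simp))
    · simp only [List.cons.injEq] at hr1
      obtain ⟨rfl, rfl⟩ := hr1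
      rcases List.sublist_cons_iff.1 h2 with hs2 | ⟨r2, hr2, hrs2⟩
      · exfalso
        exact h.1 (hs2.subset (by simp))
      · simp only [List.cons.injEq] at hr2
        exact hr2.1.symm

/-! ### the partition sets -/

def S1 (n : ℕ) : Set (List ℕ) := {p | p ∈ A n ∧ Lst p = 1}
def S2 (n : ℕ) : Set (List ℕ) := {p | p ∈ A n ∧ Lst p = 2}
def S3 (n : ℕ) : Set (List ℕ) := {p | p ∈ A n ∧ 3 ≤ Lst p}
def T2 (n : ℕ) : Set (List ℕ) := {p | p ∈ A n ∧ 2 ≤ Lst p}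

theorem im1 (n : ℕ) : S1 (n+1) = e1 '' (A n) := by
  ext p
  constructor
  · rintro ⟨hp, hl⟩
    obtain ⟨q, hq, rfl⟩ := dec1 hp hl
    exact ⟨q, hq, rfl⟩
  · rintro ⟨q, hq, rfl⟩
    exact ⟨e1_mem hq, Lst_e1 q⟩

theorem im2 (m : ℕ) : S2 (m+2) = e2 '' (A (m+1)) := by
  ext p
  constructor
  · rintro ⟨hp, hl⟩
    obtain ⟨q, hq, rfl⟩ := dec2 hp hl
    exact ⟨q, hq, rfl⟩
  · rintro ⟨q, hq, rfl⟩
    exact ⟨e2_mem hq, Lst_e2 q⟩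

theorem im3 (m : ℕ) : S3 (m+2) = e3 true '' (T2 (m+1)) ∪ e3 false '' (T2 (m+1)) := by
  ext p
  constructor
  · rintro ⟨hp, hl⟩
    obtain ⟨b, q, hq, hl2, rfl⟩ := dec3 hp hl
    cases b
    · exact Or.inr ⟨q, ⟨hq, hl2⟩, rfl⟩
    · exact Or.inl ⟨q, ⟨hq, hl2⟩, rfl⟩
  · rintro (⟨q, ⟨hq, hl2⟩, rfl⟩ | ⟨q, ⟨hq, hl2⟩, rfl⟩) <;>
    · refine ⟨e3_mem hq, ?_⟩
      rw [Lst_e3 (ne_nil_of_mem_A hq) hl2]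
      omega

theorem sub12_e3 {b : Bool} {q : List ℕ} {m : ℕ} (hq : q ∈ A (m+1)) :
    ((blk b) : List ℕ).Sublist (e3 b q) := by
  obtain ⟨u, w, rfl, hu1, hw1⟩ := split_at_one hq
  rw [e3_eq hu1 hw1, List.append_assoc]
  exact ((List.sublist_append_left (blk b) _).trans (List.sublist_append_right _ _))

theorem im3_disj (m : ℕ) :
    Disjoint (e3 true '' (T2 (m+1))) (e3 false '' (T2 (m+1))) := by
  rw [Set.disjoint_left]
  rintro p ⟨q, ⟨hq, -⟩, rfl⟩ ⟨q', ⟨hq', -⟩, he⟩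
  have hnd : (e3 true q).Nodup :=
    (e3_perm (b := true) hq.1).symm.nodup (List.nodup_range' (s := 1) (n := m+2))
  have hs1 : ([1,2] : List ℕ).Sublist (e3 true q) := sub12_e3 (b := true) hq
  have hs2 : ([2,1] : List ℕ).Sublist (e3 true q) := by
    rw [← he]
    exact sub12_e3 (b := false) hq'
  have : (1:ℕ) = 2 := no_both hnd hs1 hs2
  omega

/-! ### counting -/

theorem ncard_S1 (n : ℕ) : (S1 (n+1)).ncard = bcount n := by
  rw [im1, Set.ncard_image_of_injOn (fun a _ b _ h => e1_inj h), bcount_eq]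

theorem ncard_S2 (m : ℕ) : (S2 (m+2)).ncard = bcount (m+1) := by
  rw [im2, Set.ncard_image_of_injOn (fun a _ b _ h => e2_inj h), bcount_eq]

theorem finite_T2 (n : ℕ) : (T2 n).Finite :=
  (finite_A n).subset (fun p hp => hp.1)

theorem ncard_S3 (m : ℕ) : (S3 (m+2)).ncard = 2 * (T2 (m+1)).ncard := by
  rw [im3]
  have hinj : ∀ b : Bool, Set.InjOn (e3 b) (T2 (m+1)) := by
    intro b q hq q' hq' h
    have := congrArg (fun l => (l.erase 2).map ginv) h
    rwa [merge_e3 hq.1, merge_e3 hq'.1] at this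
  rw [Set.ncard_union_eq (im3_disj m)
    (((finite_T2 (m+1)).image _))
    (((finite_T2 (m+1)).image _)),
    Set.ncard_image_of_injOn (hinj true), Set.ncard_image_of_injOn (hinj false)]
  omega

theorem lst_ge_one {n : ℕ} {p : List ℕ} (hp : p ∈ A (n+1)) : 1 ≤ Lst p :=
  mem_ge_one hp (Lst_mem (ne_nil_of_mem_A hp))

theorem partA {n : ℕ} : A (n+1) = S1 (n+1) ∪ T2 (n+1) := by
  ext p
  constructor
  · intro hp
    have := lst_ge_one hp
    by_cases h : Lst p = 1
    · exact Or.inl ⟨hp, h⟩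
    · exact Or.inr ⟨hp, by omega⟩
  · rintro (⟨hp, -⟩ | ⟨hp, -⟩) <;> exact hp

theorem partT2 {m : ℕ} : T2 (m+2) = S2 (m+2) ∪ S3 (m+2) := by
  ext p
  constructor
  · rintro ⟨hp, h2⟩
    by_cases h : Lst p = 2
    · exact Or.inl ⟨hp, h⟩
    · exact Or.inr ⟨hp, by omega⟩
  · rintro (⟨hp, h⟩ | ⟨hp, h⟩)
    · exact ⟨hp, by omega⟩
    · exact ⟨hp, by omega⟩

theorem bcount_split (n : ℕ) : bcount (n+1) = bcount n + (T2 (n+1)).ncard := by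
  rw [bcount_eq, partA, Set.ncard_union_eq ?disj
    ((finite_A (n+1)).subset (fun p hp => hp.1)) (finite_T2 (n+1)), ncard_S1]
  case disj =>
    rw [Set.disjoint_left]
    rintro p ⟨-, h1⟩ ⟨-, h2⟩
    omega

theorem T2_split (m : ℕ) :
    (T2 (m+2)).ncard = bcount (m+1) + 2 * (T2 (m+1)).ncard := by
  rw [partT2, Set.ncard_union_eq ?disj
    ((finite_A (m+2)).subset (fun p hp => hp.1))
    ((finite_A (m+2)).subset (fun p hp => hp.1)), ncard_S2, ncard_S3]
  case disj =>
    rw [Set.disjoint_left]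
    rintro p ⟨-, h1⟩ ⟨-, h2⟩
    omega

theorem bcount_rec (m : ℕ) :
    (bcount (m+2) : ℤ) = 4 * bcount (m+1) - 2 * bcount m := by
  have h1 : bcount (m+2) = bcount (m+1) + (T2 (m+2)).ncard := bcount_split (m+1)
  have h2 := T2_split m
  have h3 := bcount_split m
  push_cast
  omega

/-! ### base cases -/

theorem bavoid_short {l : List ℕ} (h : l.length ≤ 3) : BAvoid l := by
  rw [bavoid_iff_not_viol]
  rintro ⟨w, x, y, z, hsub, -⟩
  have := hsub.length_le
  simp at this
  omega

theorem bcount_one : bcount 1 = 1 := by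
  rw [bcount_eq]
  have : A 1 = {[1]} := by
    ext l
    constructor
    · rintro ⟨h1, -⟩
      have hperm : l.Perm [1] := h1
      exact List.perm_singleton.1 hperm
    · rintro rfl
      refine ⟨?_, bavoid_short (by simp)⟩
      show ([1] : List ℕ).Perm (List.range' 1 1)
      rfl
  rw [this, Set.ncard_singleton]

theorem bcount_two : bcount 2 = 2 := by
  rw [bcount_eq]
  have : A 2 = {[1,2], [2,1]} := by
    ext l
    constructor
    · rintro ⟨h1, -⟩
      have hperm : l.Perm [1,2] := h1
      have hlen := hperm.length_eq
      have hnd : l.Nodup := hperm.symm.nodup (by simp)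
      rcases l with _|⟨a,_|⟨b,_|⟨c,t⟩⟩⟩ <;> simp at hlen
      have ha : a = 1 ∨ a = 2 := by
        have : a ∈ [1,2] := hperm.mem_iff.1 (by simp)
        simpa using this
      have hb : b = 1 ∨ b = 2 := by
        have : b ∈ [1,2] := hperm.mem_iff.1 (by simp)
        simpa using this
      have hab : a ≠ b := by
        simp only [List.nodup_cons] at hnd
        simp_all
      rcases ha with rfl | rfl <;> rcases hb with rfl | rfl <;> simp_all
    · rintro (rfl | rfl)
      · exact ⟨show ([1,2] : List ℕ).Perm (List.range' 1 2) by decide,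
          bavoid_short (by simp)⟩
      · exact ⟨show ([2,1] : List ℕ).Perm (List.range' 1 2) by decide,
          bavoid_short (by simp)⟩
  rw [this, Set.ncard_pair (by simp)]

end BProof

theorem stmt12 :
    bcount 1 = 1 ∧ bcount 2 = 2 ∧
    ∀ n : ℕ, 3 ≤ n → (bcount n : ℤ) = 4 * bcount (n - 1) - 2 * bcount (n - 2) := by
  refine ⟨BProof.bcount_one, BProof.bcount_two, ?_⟩
  intro n hn
  obtain ⟨m, rfl⟩ : ∃ m, n = m + 2 := ⟨n - 2, by omega⟩
  have h1 : m + 2 - 1 = m + 1 := by omega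
  have h2 : m + 2 - 2 = m := by omega
  rw [h1, h2]
  exact BProof.bcount_rec m
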